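/- Let L ≥ 1 be an integer and 0 < p_odd ≤ p_src < 1 reals. Let ν = (ν_0,…,ν_L) be nonnegative reals with ν_M = 0 for all M < L·p_src, let δ₁ ≥ 0, and let 𝒬 = { Q pmf on {0,…,L} : ∑_M Q(M)ν_M ≥ ∑_M 𝔟_{L,p_src}(M)ν_M + δ₁ } be nonempty. Then inf_{Q ∈ 𝒬} D(Q‖𝔟_{L,p_odd}) ≥ inf_{Q ∈ 𝒬} D(Q‖𝔟_{L,p_src}). -/

import Mathlib

open Finset

/-- The binomial pmf with `L` trials and success probability `p`. -/
noncomputable def binomPmf (L : ℕ) (p : ℝ) (M : ℕ) : ℝ :=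
  (Nat.choose L M : ℝ) * p ^ M * (1 - p) ^ (L - M)

/-- The base-2 Kullback–Leibler divergence `D(P‖Q)` (sum over the support of `P`). -/
noncomputable def klDiv {W : Type*} [Fintype W] (P Q : W → ℝ) : ℝ :=
  ∑ w, if 0 < P w then P w * Real.logb 2 (P w / Q w) else 0


/-- natural-log KL sum -/
noncomputable def nkl {W : Type*} [Fintype W] (P Q : W → ℝ) : ℝ :=
  ∑ w, if 0 < P w then P w * Real.log (P w / Q w) else 0

lemma klDiv_eq_nkl {W : Type*} [Fintype W] (P Q : W → ℝ) :
    klDiv P Q = nkl P Q / Real.log 2 := by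
  rw [klDiv, nkl, Finset.sum_div]
  refine Finset.sum_congr rfl fun w _ => ?_
  split
  · rw [Real.logb, mul_div_assoc]
  · simp

lemma bpos (L : ℕ) (p : ℝ) (hp : 0 < p) (hp1 : p < 1) (M : Fin (L+1)) :
    0 < binomPmf L p (M : ℕ) := by
  have hM : (M : ℕ) ≤ L := Fin.is_le M
  have : 0 < Nat.choose L M := Nat.choose_pos hM
  have h1p : 0 < 1 - p := by linarith
  have hc : (0:ℝ) < (Nat.choose L M : ℝ) := by exact_mod_cast this
  exact mul_pos (mul_pos hc (pow_pos hp _)) (pow_pos h1p _)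

lemma bsum (L : ℕ) (p : ℝ) : ∑ M : Fin (L+1), binomPmf L p (M : ℕ) = 1 := by
  rw [Fin.sum_univ_eq_sum_range (fun M => binomPmf L p M)]
  have h := add_pow p (1 - p) L
  simp only [add_sub_cancel, one_pow] at h
  rw [show (1:ℝ) = (p + (1-p))^L by rw [add_sub_cancel]; simp]
  rw [add_pow]
  refine Finset.sum_congr rfl fun M _ => ?_
  rw [binomPmf]; ring


/-- Gibbs-type inequality (natural log): if `P` is a pmf, `q > 0`, and the `q`-mass of the
support of `P` is at most `c > 0`, then `∑_{P>0} P ln(P/q) ≥ -ln c`. -/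
lemma gibbs {W : Type*} [Fintype W] (P q : W → ℝ) (hP : ∀ w, 0 ≤ P w)
    (hPs : ∑ w, P w = 1) (hq : ∀ w, 0 < q w) (c : ℝ) (hc0 : 0 < c)
    (hc : (∑ w, if 0 < P w then q w else 0) ≤ c) :
    -Real.log c ≤ ∑ w, if 0 < P w then P w * Real.log (P w / q w) else 0 := by
  have key : ∀ w, (if 0 < P w then P w - q w / c - P w * Real.log c else 0) ≤
      (if 0 < P w then P w * Real.log (P w / q w) else 0) := by
    intro w
    split
    case isTrue hw =>
      have hqw := hq w
      have hpos : 0 < q w / (c * P w) := by positivity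
      have hlog := Real.log_le_sub_one_of_pos hpos
      rw [Real.log_div (ne_of_gt hqw) (by positivity)] at hlog
      rw [Real.log_mul (ne_of_gt hc0) (ne_of_gt hw)] at hlog
      have hlog2 : Real.log (P w / q w) = Real.log (P w) - Real.log (q w) :=
        Real.log_div (ne_of_gt hw) (ne_of_gt hqw)
      have hdiv : P w * (q w / (c * P w)) = q w / c := by
        field_simp
      nlinarith [mul_le_mul_of_nonneg_left hlog (le_of_lt hw)]
    case isFalse => exact le_refl 0
  have hsum := Finset.sum_le_sum (fun w (_ : w ∈ Finset.univ) => key w)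
  have e1 : ∑ w, (if 0 < P w then P w - q w / c - P w * Real.log c else 0)
      = (∑ w, P w) - (∑ w, if 0 < P w then q w else 0) / c - Real.log c * (∑ w, P w) := by
    rw [Finset.sum_div, ← Finset.sum_sub_distrib, Finset.mul_sum, ← Finset.sum_sub_distrib]
    refine Finset.sum_congr rfl fun w _ => ?_
    split
    case isTrue => ring
    case isFalse hw =>
      have : P w = 0 := le_antisymm (not_lt.1 hw) (hP w)
      simp [this]
  rw [e1, hPs] at hsum
  have h2 : (∑ w, if 0 < P w then q w else 0) / c ≤ 1 := by
    rw [div_le_one hc0]; exact hc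
  linarith


/-- Pointwise: above the mean `L·p_src`, the `p_odd`-binomial is dominated by the
`p_src`-binomial. -/
lemma binom_pointwise (L : ℕ) (p_odd p_src : ℝ) (h1 : 0 < p_odd) (h2 : p_odd ≤ p_src)
    (h3 : p_src < 1) (M : Fin (L+1)) (hM : (L : ℝ) * p_src ≤ ((M : ℕ) : ℝ)) :
    binomPmf L p_odd (M : ℕ) ≤ binomPmf L p_src (M : ℕ) := by
  have hps : 0 < p_src := lt_of_lt_of_le h1 h2
  have h1o : 0 < 1 - p_odd := by linarith
  have h1s : 0 < 1 - p_src := by linarith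
  have hML : (M : ℕ) ≤ L := Fin.is_le M
  -- binary Gibbs : p_src * (log p_src - log p_odd) ≥ (1 - p_src) * (log (1-p_odd) - log (1-p_src))
  have k1 : Real.log (p_odd / p_src) ≤ p_odd / p_src - 1 :=
    Real.log_le_sub_one_of_pos (by positivity)
  have k2 : Real.log ((1 - p_odd) / (1 - p_src)) ≤ (1 - p_odd) / (1 - p_src) - 1 :=
    Real.log_le_sub_one_of_pos (by positivity)
  rw [Real.log_div (ne_of_gt h1) (ne_of_gt hps)] at k1
  rw [Real.log_div (ne_of_gt h1o) (ne_of_gt h1s)] at k2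
  have k1' : p_src * (Real.log p_odd - Real.log p_src) ≤ p_odd - p_src := by
    have := mul_le_mul_of_nonneg_left k1 (le_of_lt hps)
    have hd : p_src * (p_odd / p_src - 1) = p_odd - p_src := by field_simp
    linarith [this.trans_eq hd]
  have k2' : (1 - p_src) * (Real.log (1 - p_odd) - Real.log (1 - p_src)) ≤ p_src - p_odd := by
    have := mul_le_mul_of_nonneg_left k2 (le_of_lt h1s)
    have hd : (1 - p_src) * ((1 - p_odd) / (1 - p_src) - 1) = p_src - p_odd := by field_simp; ring
    linarith [this.trans_eq hd]
  set a := Real.log p_src - Real.log p_odd with ha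
  set b := Real.log (1 - p_odd) - Real.log (1 - p_src) with hb
  have ha0 : 0 ≤ a := by
    have := Real.log_le_log h1 h2
    linarith
  have hb0 : 0 ≤ b := by
    have := Real.log_le_log h1s (by linarith : 1 - p_src ≤ 1 - p_odd)
    linarith
  -- binary Gibbs: p_src * a ≥ (1 - p_src) * b ... from k1' + k2'?
  have gibbs2 : (1 - p_src) * b ≤ p_src * a := by nlinarith [k1', k2']
  -- main linear inequality
  have hcast : ((L - (M:ℕ) : ℕ) : ℝ) = (L : ℝ) - ((M:ℕ) : ℝ) := by
    rw [Nat.cast_sub hML]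
  have hLM : ((L - (M:ℕ) : ℕ) : ℝ) ≤ (L : ℝ) * (1 - p_src) := by
    rw [hcast]; nlinarith
  have lin : ((L - (M:ℕ) : ℕ) : ℝ) * b ≤ ((M:ℕ) : ℝ) * a := by
    have t1 : ((L - (M:ℕ) : ℕ) : ℝ) * b ≤ (L : ℝ) * (1 - p_src) * b :=
      mul_le_mul_of_nonneg_right hLM hb0
    have t2 : (L : ℝ) * p_src * a ≤ ((M:ℕ) : ℝ) * a := mul_le_mul_of_nonneg_right hM ha0
    nlinarith [gibbs2, (by positivity : (0:ℝ) ≤ (L:ℝ))]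
  -- exponentiate
  have key : p_odd ^ (M:ℕ) * (1 - p_odd) ^ (L - (M:ℕ)) ≤
      p_src ^ (M:ℕ) * (1 - p_src) ^ (L - (M:ℕ)) := by
    rw [← Real.log_le_log_iff (by positivity) (by positivity)]
    rw [Real.log_mul (by positivity) (by positivity), Real.log_mul (by positivity) (by positivity),
      Real.log_pow, Real.log_pow, Real.log_pow, Real.log_pow]
    push_cast
    nlinarith [lin]
  rw [binomPmf, binomPmf, mul_assoc, mul_assoc]
  exact mul_le_mul_of_nonneg_left key (by positivity)

lemma nkl_nonneg {W : Type*} [Fintype W] (P q : W → ℝ) (hP : ∀ w, 0 ≤ P w)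
    (hPs : ∑ w, P w = 1) (hq : ∀ w, 0 < q w) (hqs : ∑ w, q w = 1) : 0 ≤ nkl P q := by
  have h := gibbs P q hP hPs hq 1 one_pos ?_
  · simpa [nkl, Real.log_one] using h
  · calc (∑ w, if 0 < P w then q w else 0) ≤ ∑ w, q w := by
          refine Finset.sum_le_sum fun w _ => ?_
          split
          · exact le_refl _
          · exact le_of_lt (hq w)
      _ = 1 := hqs

set_option maxHeartbeats 2000000 in
lemma main_aux (L : ℕ) (hL : 1 ≤ L) (p_odd p_src : ℝ)
    (h1 : 0 < p_odd) (h2 : p_odd ≤ p_src) (h3 : p_src < 1)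
    (ν : Fin (L + 1) → ℝ) (hν0 : ∀ M, 0 ≤ ν M)
    (hνzero : ∀ M : Fin (L + 1), ((M : ℕ) : ℝ) < (L : ℝ) * p_src → ν M = 0)
    (δ₁ : ℝ) (hδ₁ : 0 ≤ δ₁)
    (Q : Fin (L + 1) → ℝ) (hQnn : ∀ M, 0 ≤ Q M) (hQs : ∑ M, Q M = 1)
    (hQc : ∑ M, Q M * ν M ≥ ∑ M : Fin (L + 1), binomPmf L p_src (M : ℕ) * ν M + δ₁) :
    ∃ Q' : Fin (L + 1) → ℝ, ((∀ M, 0 ≤ Q' M) ∧ ∑ M, Q' M = 1) ∧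
      (∑ M, Q' M * ν M ≥ ∑ M : Fin (L + 1), binomPmf L p_src (M : ℕ) * ν M + δ₁) ∧
      klDiv Q' (fun M => binomPmf L p_src (M : ℕ)) ≤ klDiv Q (fun M => binomPmf L p_odd (M : ℕ)) := by
  have hps : 0 < p_src := lt_of_lt_of_le h1 h2
  have hpo1 : p_odd < 1 := lt_of_le_of_lt h2 h3
  set bs : Fin (L+1) → ℝ := fun M => binomPmf L p_src (M : ℕ) with hbs_def
  set bo : Fin (L+1) → ℝ := fun M => binomPmf L p_odd (M : ℕ) with hbo_def
  have hbs : ∀ M, 0 < bs M := fun M => bpos L p_src hps h3 M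
  have hbo : ∀ M, 0 < bo M := fun M => bpos L p_odd h1 hpo1 M
  have hbssum : ∑ M, bs M = 1 := bsum L p_src
  have hbosum : ∑ M, bo M = 1 := bsum L p_odd
  have hlog2 : 0 < Real.log 2 := Real.log_pos (by norm_num)
  have hQbo_nn : 0 ≤ nkl Q bo := nkl_nonneg Q bo hQnn hQs hbo hbosum
  set E0 : ℝ := ∑ M, bs M * ν M with hE0_def
  have hE0nn : 0 ≤ E0 :=
    Finset.sum_nonneg fun M _ => mul_nonneg (le_of_lt (hbs M)) (hν0 M)
  rcases eq_or_lt_of_le hδ₁ with hδz | hδpos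
  · -- δ₁ = 0 : take Q' = bs itself
    refine ⟨bs, ⟨fun M => le_of_lt (hbs M), hbssum⟩, ?_, ?_⟩
    · rw [← hδz, add_zero]
    · have hnklz : nkl bs bs = 0 := by
        rw [nkl]
        refine Finset.sum_eq_zero fun M _ => ?_
        rw [if_pos (hbs M), div_self (ne_of_gt (hbs M)), Real.log_one, mul_zero]
      rw [klDiv_eq_nkl, klDiv_eq_nkl, hnklz]
      exact div_le_div_of_nonneg_right hQbo_nn (le_of_lt hlog2)
  · -- δ₁ > 0
    set V : ℝ := E0 + δ₁ with hV_def
    have hV0 : 0 < V := by positivity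
    obtain ⟨Mt, -, hMt⟩ := Finset.exists_max_image Finset.univ ν ⟨0, Finset.mem_univ 0⟩
    set T : ℝ := ν Mt with hT_def
    have hT : ∀ M, ν M ≤ T := fun M => hMt M (Finset.mem_univ M)
    have hQνT : ∑ M, Q M * ν M ≤ T := by
      calc ∑ M, Q M * ν M ≤ ∑ M, Q M * T :=
            Finset.sum_le_sum fun M _ => mul_le_mul_of_nonneg_left (hT M) (hQnn M)
        _ = T := by rw [← Finset.sum_mul, hQs, one_mul]
    have hVT : V ≤ T := le_trans hQc hQνT
    have hT0 : 0 < T := lt_of_lt_of_le hV0 hVT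
    have hhigh : ∀ M, 0 < ν M → (L : ℝ) * p_src ≤ ((M : ℕ) : ℝ) := by
      intro M hM
      by_contra hcon
      push_neg at hcon
      exact absurd (hνzero M hcon) (ne_of_gt hM)
    have hbob : ∀ M, 0 < ν M → bo M ≤ bs M := fun M h =>
      binom_pointwise L p_odd p_src h1 h2 h3 M (hhigh M h)
    rcases eq_or_lt_of_le hVT with hTeq | hVltT
    · -- V = T : all feasible Q are supported on the set where ν = T
      set bS : ℝ := ∑ M, if T ≤ ν M then bs M else 0 with hbS_def
      have hbSpos : 0 < bS := by
        refine Finset.sum_pos' (fun M _ => ?_) ⟨Mt, Finset.mem_univ Mt, ?_⟩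
        · split
          · exact le_of_lt (hbs M)
          · exact le_refl 0
        · rw [if_pos (le_refl T)]
          exact hbs Mt
      have hsuppS : ∀ M, 0 < Q M → T ≤ ν M := by
        intro M0 hM0
        by_contra hcon
        push_neg at hcon
        have hlt : ∑ M, Q M * ν M < ∑ M, Q M * T := by
          refine Finset.sum_lt_sum
            (fun M _ => mul_le_mul_of_nonneg_left (hT M) (hQnn M))
            ⟨M0, Finset.mem_univ M0, ?_⟩
          exact mul_lt_mul_of_pos_left hcon hM0
        rw [← Finset.sum_mul, hQs, one_mul] at hlt
        rw [hTeq] at hQc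
        linarith
      set Q' : Fin (L+1) → ℝ := fun M => if T ≤ ν M then bs M / bS else 0 with hQ'_def
      have hQ'nn : ∀ M, 0 ≤ Q' M := by
        intro M
        simp only [hQ'_def]
        split
        · exact le_of_lt (div_pos (hbs M) hbSpos)
        · exact le_refl 0
      have hQ'split : ∀ M : Fin (L+1), Q' M = (if T ≤ ν M then bs M else 0) / bS := by
        intro M
        simp only [hQ'_def]
        by_cases h : T ≤ ν M
        · rw [if_pos h, if_pos h]
        · rw [if_neg h, if_neg h, zero_div]
      have hQ's : ∑ M, Q' M = 1 := by
        rw [Finset.sum_congr rfl (fun M _ => hQ'split M), ← Finset.sum_div, ← hbS_def,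
          div_self (ne_of_gt hbSpos)]
      have hQ'c : ∑ M, Q' M * ν M = V := by
        have hterm : ∀ M : Fin (L+1), Q' M * ν M
            = (if T ≤ ν M then bs M else 0) / bS * T := by
          intro M
          simp only [hQ'_def]
          by_cases h : T ≤ ν M
          · rw [if_pos h, if_pos h, le_antisymm (hT M) h]
          · rw [if_neg h, if_neg h, zero_mul, zero_div, zero_mul]
        rw [Finset.sum_congr rfl (fun M _ => hterm M)]
        rw [← Finset.sum_mul, ← Finset.sum_div, ← hbS_def, div_self (ne_of_gt hbSpos), one_mul]
        exact hTeq.symm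
      refine ⟨Q', ⟨hQ'nn, hQ's⟩, by rw [hQ'c], ?_⟩
      -- KL comparison
      have hnklQ' : nkl Q' bs = -Real.log bS := by
        rw [nkl]
        have hterm : ∀ M : Fin (L+1),
            (if 0 < Q' M then Q' M * Real.log (Q' M / bs M) else 0)
            = (if T ≤ ν M then bs M else 0) / bS * (-Real.log bS) := by
          intro M
          by_cases h : T ≤ ν M
          · have hQ'M : Q' M = bs M / bS := by rw [hQ'_def]; exact if_pos h
            have hpos : 0 < Q' M := by rw [hQ'M]; exact div_pos (hbs M) hbSpos
            rw [if_pos hpos, if_pos h, hQ'M]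
            have hq : bs M / bS / bs M = bS⁻¹ := by
              rw [div_div, mul_comm, div_mul_eq_div_div, div_self (ne_of_gt (hbs M)), one_div]
            rw [hq, Real.log_inv]
          · have hQ'M : Q' M = 0 := by rw [hQ'_def]; exact if_neg h
            rw [if_neg (by rw [hQ'M]; exact lt_irrefl 0), if_neg h, zero_div, zero_mul]
        rw [Finset.sum_congr rfl (fun M _ => hterm M), ← Finset.sum_mul, ← Finset.sum_div,
          ← hbS_def, div_self (ne_of_gt hbSpos), one_mul]
      have hstep1 : nkl Q bs ≤ nkl Q bo := by
        rw [nkl, nkl]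
        refine Finset.sum_le_sum fun M _ => ?_
        by_cases h : 0 < Q M
        · rw [if_pos h, if_pos h]
          have hν : 0 < ν M := lt_of_lt_of_le hT0 (hsuppS M h)
          have hble := hbob M hν
          have hdivle : Q M / bs M ≤ Q M / bo M :=
            div_le_div_of_nonneg_left (le_of_lt h) (hbo M) hble
          exact mul_le_mul_of_nonneg_left
            (Real.log_le_log (div_pos h (hbs M)) hdivle) (le_of_lt h)
        · rw [if_neg h, if_neg h]
      have hstep2 : -Real.log bS ≤ nkl Q bs := by
        refine gibbs Q bs hQnn hQs hbs bS hbSpos ?_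
        rw [hbS_def]
        refine Finset.sum_le_sum fun M _ => ?_
        by_cases h : 0 < Q M
        · rw [if_pos h, if_pos (hsuppS M h)]
        · rw [if_neg h]
          split
          · exact le_of_lt (hbs M)
          · exact le_refl 0
      rw [klDiv_eq_nkl, klDiv_eq_nkl, hnklQ']
      exact div_le_div_of_nonneg_right (le_trans hstep2 hstep1) (le_of_lt hlog2)
    · -- V < T : exponential tilting
      set Z : ℝ → ℝ := fun l => ∑ M, bs M * Real.exp (l * ν M) with hZ_def
      have hZpos : ∀ l, 0 < Z l := by
        intro l
        exact Finset.sum_pos (fun M _ => mul_pos (hbs M) (Real.exp_pos _))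
          ⟨0, Finset.mem_univ 0⟩
      set F : ℝ → ℝ := fun l => ∑ M, bs M * (ν M - V) * Real.exp (l * ν M) with hF_def
      have hF0 : F 0 = -δ₁ := by
        have e1 : F 0 = ∑ M, (bs M * ν M - V * bs M) := by
          simp only [hF_def, zero_mul, Real.exp_zero, mul_one]
          exact Finset.sum_congr rfl fun M _ => by ring
        rw [e1, Finset.sum_sub_distrib, ← Finset.mul_sum, hbssum, ← hE0_def, hV_def]
        ring
      set β : ℝ := bs Mt * (T - V) with hβ_def
      have hβ : 0 < β := mul_pos (hbs Mt) (by linarith)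
      set lam : ℝ := max 0 ((Real.log V - Real.log β) / (T - V)) with hlam_def
      have hlam0 : 0 ≤ lam := le_max_left _ _
      have hexp : V * Real.exp (lam * V) ≤ β * Real.exp (lam * T) := by
        have h4 : (Real.log V - Real.log β) / (T - V) ≤ lam := le_max_right _ _
        have h5 : Real.log V - Real.log β ≤ lam * (T - V) :=
          (div_le_iff₀ (by linarith)).1 h4
        calc V * Real.exp (lam * V) = Real.exp (Real.log V + lam * V) := by
              rw [Real.exp_add, Real.exp_log hV0]
          _ ≤ Real.exp (Real.log β + lam * T) := Real.exp_le_exp.2 (by nlinarith)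
          _ = β * Real.exp (lam * T) := by rw [Real.exp_add, Real.exp_log hβ]
      have hF1 : 0 ≤ F lam := by
        have per : ∀ M : Fin (L+1), -(bs M * (V * Real.exp (lam * V)))
            ≤ bs M * (ν M - V) * Real.exp (lam * ν M) := by
          intro M
          rcases le_or_gt (ν M) V with hc | hc
          · have he : Real.exp (lam * ν M) ≤ Real.exp (lam * V) :=
              Real.exp_le_exp.2 (mul_le_mul_of_nonneg_left hc hlam0)
            have t1 : (ν M - V) * Real.exp (lam * V) ≤ (ν M - V) * Real.exp (lam * ν M) :=
              mul_le_mul_of_nonpos_left he (by linarith)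
            have t2 : -V * Real.exp (lam * V) ≤ (ν M - V) * Real.exp (lam * V) :=
              mul_le_mul_of_nonneg_right (by linarith [hν0 M]) (le_of_lt (Real.exp_pos _))
            have t3 := mul_le_mul_of_nonneg_left (le_trans t2 t1) (le_of_lt (hbs M))
            nlinarith [t3]
          · have r1 : 0 ≤ bs M * (ν M - V) * Real.exp (lam * ν M) :=
              mul_nonneg (mul_nonneg (le_of_lt (hbs M)) (by linarith))
                (le_of_lt (Real.exp_pos _))
            have r2 : 0 ≤ bs M * (V * Real.exp (lam * V)) :=
              mul_nonneg (le_of_lt (hbs M))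
                (mul_nonneg (le_of_lt hV0) (le_of_lt (Real.exp_pos _)))
            linarith
        have hsplit : F lam = bs Mt * (ν Mt - V) * Real.exp (lam * ν Mt)
            + ∑ M ∈ Finset.univ.erase Mt, bs M * (ν M - V) * Real.exp (lam * ν M) :=
          (Finset.add_sum_erase Finset.univ
            (fun M => bs M * (ν M - V) * Real.exp (lam * ν M)) (Finset.mem_univ Mt)).symm
        have hbound : ∑ M ∈ Finset.univ.erase Mt, -(bs M * (V * Real.exp (lam * V)))
            ≤ ∑ M ∈ Finset.univ.erase Mt, bs M * (ν M - V) * Real.exp (lam * ν M) :=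
          Finset.sum_le_sum fun M _ => per M
        have hneg : ∑ M ∈ Finset.univ.erase Mt, -(bs M * (V * Real.exp (lam * V)))
            = -((∑ M ∈ Finset.univ.erase Mt, bs M) * (V * Real.exp (lam * V))) := by
          calc ∑ M ∈ Finset.univ.erase Mt, -(bs M * (V * Real.exp (lam * V)))
              = ∑ M ∈ Finset.univ.erase Mt, bs M * -(V * Real.exp (lam * V)) :=
                Finset.sum_congr rfl fun M _ => by ring
            _ = (∑ M ∈ Finset.univ.erase Mt, bs M) * -(V * Real.exp (lam * V)) := by
                rw [← Finset.sum_mul]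
            _ = -((∑ M ∈ Finset.univ.erase Mt, bs M) * (V * Real.exp (lam * V))) := by ring
        have hberase : ∑ M ∈ Finset.univ.erase Mt, bs M ≤ 1 := by
          rw [← hbssum]
          exact Finset.sum_le_sum_of_subset_of_nonneg (Finset.erase_subset _ _)
            (fun M _ _ => le_of_lt (hbs M))
        have hmain : bs Mt * (ν Mt - V) * Real.exp (lam * ν Mt)
            = β * Real.exp (lam * T) := rfl
        have hVe : 0 < V * Real.exp (lam * V) := mul_pos hV0 (Real.exp_pos _)
        have hnn : 0 ≤ ∑ M ∈ Finset.univ.erase Mt, bs M :=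
          Finset.sum_nonneg fun M _ => le_of_lt (hbs M)
        have h6 : -(V * Real.exp (lam * V))
            ≤ -((∑ M ∈ Finset.univ.erase Mt, bs M) * (V * Real.exp (lam * V))) := by
          nlinarith
        rw [hsplit, hmain]
        linarith [hbound, hneg, h6, hexp, hneg ▸ hbound]
      have hcont : Continuous F := by
        rw [hF_def]
        apply continuous_finset_sum
        intro M _
        exact continuous_const.mul (Real.continuous_exp.comp (continuous_mul_right (ν M)))
      have h0mem : (0:ℝ) ∈ Set.Icc (F 0) (F lam) := by
        constructor
        · rw [hF0]; linarith
        · exact hF1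
      obtain ⟨l, hlmem, hFl⟩ := intermediate_value_Icc hlam0 hcont.continuousOn h0mem
      have hl0 : 0 ≤ l := hlmem.1
      have key0 : ∑ M, bs M * ν M * Real.exp (l * ν M) = V * Z l := by
        have expand : F l = (∑ M, bs M * ν M * Real.exp (l * ν M)) - V * Z l := by
          rw [hF_def, hZ_def]
          rw [Finset.mul_sum, ← Finset.sum_sub_distrib]
          exact Finset.sum_congr rfl fun M _ => by ring
        rw [hFl] at expand
        linarith
      set Q' : Fin (L+1) → ℝ := fun M => bs M * Real.exp (l * ν M) / Z l with hQ'_def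
      have hQ'pos : ∀ M, 0 < Q' M := by
        intro M
        exact div_pos (mul_pos (hbs M) (Real.exp_pos _)) (hZpos l)
      have hQ's : ∑ M, Q' M = 1 := by
        simp only [hQ'_def]
        rw [← Finset.sum_div]
        rw [show ∑ M, bs M * Real.exp (l * ν M) = Z l from rfl]
        exact div_self (ne_of_gt (hZpos l))
      have hQ'c : ∑ M, Q' M * ν M = V := by
        have e1 : ∀ M : Fin (L+1), Q' M * ν M = bs M * ν M * Real.exp (l * ν M) / Z l := by
          intro M
          simp only [hQ'_def]
          ring
        rw [Finset.sum_congr rfl (fun M _ => e1 M), ← Finset.sum_div, key0,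
          mul_div_assoc, div_self (ne_of_gt (hZpos l)), mul_one]
      have hnklQ' : nkl Q' bs = l * V - Real.log (Z l) := by
        have e1 : ∀ M : Fin (L+1),
            (if 0 < Q' M then Q' M * Real.log (Q' M / bs M) else 0)
            = l * (Q' M * ν M) - Real.log (Z l) * Q' M := by
          intro M
          rw [if_pos (hQ'pos M)]
          have hr : Q' M / bs M = Real.exp (l * ν M) / Z l := by
            simp only [hQ'_def]
            rw [div_div, mul_comm (Z l) (bs M), ← div_div,
              mul_comm (bs M) (Real.exp (l * ν M)), mul_div_assoc,
              div_self (ne_of_gt (hbs M)), mul_one]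
          rw [hr, Real.log_div (Real.exp_ne_zero _) (ne_of_gt (hZpos l)), Real.log_exp]
          ring
        rw [nkl, Finset.sum_congr rfl (fun M _ => e1 M), Finset.sum_sub_distrib,
          ← Finset.mul_sum, ← Finset.mul_sum, hQ'c, hQ's, mul_one]
      -- comparison of partition functions
      set Zo : ℝ := ∑ M, bo M * Real.exp (l * ν M) with hZo_def
      have hZopos : 0 < Zo :=
        Finset.sum_pos (fun M _ => mul_pos (hbo M) (Real.exp_pos _)) ⟨0, Finset.mem_univ 0⟩
      have hZoZ : Zo ≤ Z l := by
        have per : ∀ M : Fin (L+1), 0 ≤ (bs M - bo M) * (Real.exp (l * ν M) - 1) := by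
          intro M
          rcases eq_or_lt_of_le (hν0 M) with hz | hp
          · rw [← hz, mul_zero, Real.exp_zero, sub_self, mul_zero]
          · have h7 : bo M ≤ bs M := hbob M hp
            have h8 : 1 ≤ Real.exp (l * ν M) :=
              Real.one_le_exp (mul_nonneg hl0 (le_of_lt hp))
            nlinarith
        have expand : ∑ M, (bs M - bo M) * (Real.exp (l * ν M) - 1)
            = (Z l - Zo) - ((∑ M, bs M) - (∑ M, bo M)) := by
          rw [hZ_def, hZo_def, ← Finset.sum_sub_distrib, ← Finset.sum_sub_distrib,
            ← Finset.sum_sub_distrib]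
          exact Finset.sum_congr rfl fun M _ => by ring
        have hnn : 0 ≤ ∑ M, (bs M - bo M) * (Real.exp (l * ν M) - 1) :=
          Finset.sum_nonneg fun M _ => per M
        rw [expand, hbssum, hbosum] at hnn
        linarith
      -- weak duality for the p_odd problem
      have hdual : l * V - Real.log Zo ≤ nkl Q bo := by
        set qt : Fin (L+1) → ℝ := fun M => bo M * Real.exp (l * ν M) / Zo with hqt_def
        have hqtpos : ∀ M, 0 < qt M := fun M =>
          div_pos (mul_pos (hbo M) (Real.exp_pos _)) hZopos
        have hqts : ∑ M, qt M = 1 := by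
          simp only [hqt_def]
          rw [← Finset.sum_div]
          rw [show ∑ M, bo M * Real.exp (l * ν M) = Zo from rfl]
          exact div_self (ne_of_gt hZopos)
        have hgibbs := gibbs Q qt hQnn hQs hqtpos 1 one_pos ?side
        case side =>
          calc (∑ M, if 0 < Q M then qt M else 0) ≤ ∑ M, qt M := by
                refine Finset.sum_le_sum fun M _ => ?_
                split
                · exact le_refl _
                · exact le_of_lt (hqtpos M)
            _ = 1 := hqts
        rw [Real.log_one, neg_zero] at hgibbs
        have decomp : nkl Q bo = (∑ M, if 0 < Q M then Q M * Real.log (Q M / qt M) else 0)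
            + ∑ M, (l * (Q M * ν M) - Real.log Zo * Q M) := by
          rw [nkl, ← Finset.sum_add_distrib]
          refine Finset.sum_congr rfl fun M _ => ?_
          by_cases h : 0 < Q M
          · rw [if_pos h, if_pos h]
            have hr : qt M / bo M = Real.exp (l * ν M) / Zo := by
              simp only [hqt_def]
              rw [div_div, mul_comm Zo (bo M), ← div_div,
                mul_comm (bo M) (Real.exp (l * ν M)), mul_div_assoc,
                div_self (ne_of_gt (hbo M)), mul_one]
            have e2 : Real.log (Q M / bo M) = Real.log (Q M / qt M)
                + (l * ν M - Real.log Zo) := by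
              rw [Real.log_div (ne_of_gt h) (ne_of_gt (hbo M)),
                Real.log_div (ne_of_gt h) (ne_of_gt (hqtpos M))]
              have e3 : Real.log (qt M) = Real.log (bo M) + (l * ν M - Real.log Zo) := by
                have : qt M = bo M * (Real.exp (l * ν M) / Zo) := by
                  simp only [hqt_def]; ring
                rw [this, Real.log_mul (ne_of_gt (hbo M))
                    (ne_of_gt (div_pos (Real.exp_pos _) hZopos)),
                  Real.log_div (Real.exp_ne_zero _) (ne_of_gt hZopos), Real.log_exp]
              rw [e3]
              ring
            rw [e2]
            ring
          · rw [if_neg h, if_neg h]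
            have hq0 : Q M = 0 := le_antisymm (not_lt.1 h) (hQnn M)
            rw [hq0]
            ring
        have tail : ∑ M, (l * (Q M * ν M) - Real.log Zo * Q M)
            = l * (∑ M, Q M * ν M) - Real.log Zo := by
          rw [Finset.sum_sub_distrib, ← Finset.mul_sum, ← Finset.mul_sum, hQs, mul_one]
        rw [decomp, tail]
        have h9 : l * V ≤ l * (∑ M, Q M * ν M) := mul_le_mul_of_nonneg_left hQc hl0
        have h10 : (0:ℝ) ≤ ∑ M, if 0 < Q M then Q M * Real.log (Q M / qt M) else 0 := hgibbs
        exact le_trans (sub_le_sub_right h9 (Real.log Zo)) (le_add_of_nonneg_left h10)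
      refine ⟨Q', ⟨fun M => le_of_lt (hQ'pos M), hQ's⟩, by rw [hQ'c], ?_⟩
      rw [klDiv_eq_nkl, klDiv_eq_nkl, hnklQ']
      have hlogZ : Real.log Zo ≤ Real.log (Z l) := Real.log_le_log hZopos hZoZ
      exact div_le_div_of_nonneg_right (by linarith : l * V - Real.log (Z l) ≤ nkl Q bo)
        (le_of_lt hlog2)

/-- with `0 < p_odd ≤ p_src < 1`, `ν ≥ 0` vanishing below `L·p_src`, `δ₁ ≥ 0`
and the (nonempty) constraint set `𝒬 = {Q : E_Q[ν] ≥ E_{𝔟_{L,p_src}}[ν] + δ₁}`,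
one has `inf_{Q∈𝒬} D(Q‖𝔟_{L,p_odd}) ≥ inf_{Q∈𝒬} D(Q‖𝔟_{L,p_src})`. -/
theorem stmt_6 (L : ℕ) (hL : 1 ≤ L) (p_odd p_src : ℝ)
    (h1 : 0 < p_odd) (h2 : p_odd ≤ p_src) (h3 : p_src < 1)
    (ν : Fin (L + 1) → ℝ) (hν0 : ∀ M, 0 ≤ ν M)
    (hνzero : ∀ M : Fin (L + 1), ((M : ℕ) : ℝ) < (L : ℝ) * p_src → ν M = 0)
    (δ₁ : ℝ) (hδ₁ : 0 ≤ δ₁)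
    (Q0 : Fin (L + 1) → ℝ)
    (hQ0 : ((∀ M, 0 ≤ Q0 M) ∧ ∑ M, Q0 M = 1) ∧
      ∑ M, Q0 M * ν M ≥ ∑ M : Fin (L + 1), binomPmf L p_src (M : ℕ) * ν M + δ₁) :
    sInf {r : ℝ | ∃ Q : Fin (L + 1) → ℝ, ((∀ M, 0 ≤ Q M) ∧ ∑ M, Q M = 1) ∧
        (∑ M, Q M * ν M ≥ ∑ M : Fin (L + 1), binomPmf L p_src (M : ℕ) * ν M + δ₁) ∧
        r = klDiv Q (fun M => binomPmf L p_src (M : ℕ))} ≤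
      sInf {r : ℝ | ∃ Q : Fin (L + 1) → ℝ, ((∀ M, 0 ≤ Q M) ∧ ∑ M, Q M = 1) ∧
        (∑ M, Q M * ν M ≥ ∑ M : Fin (L + 1), binomPmf L p_src (M : ℕ) * ν M + δ₁) ∧
        r = klDiv Q (fun M => binomPmf L p_odd (M : ℕ))} := by
  obtain ⟨⟨hQ0nn, hQ0s⟩, hQ0c⟩ := hQ0
  have hps : 0 < p_src := lt_of_lt_of_le h1 h2
  have hBne : Set.Nonempty {r : ℝ | ∃ Q : Fin (L + 1) → ℝ,
      ((∀ M, 0 ≤ Q M) ∧ ∑ M, Q M = 1) ∧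
      (∑ M, Q M * ν M ≥ ∑ M : Fin (L + 1), binomPmf L p_src (M : ℕ) * ν M + δ₁) ∧
      r = klDiv Q (fun M => binomPmf L p_odd (M : ℕ))} :=
    ⟨_, Q0, ⟨hQ0nn, hQ0s⟩, hQ0c, rfl⟩
  have hAbdd : BddBelow {r : ℝ | ∃ Q : Fin (L + 1) → ℝ,
      ((∀ M, 0 ≤ Q M) ∧ ∑ M, Q M = 1) ∧
      (∑ M, Q M * ν M ≥ ∑ M : Fin (L + 1), binomPmf L p_src (M : ℕ) * ν M + δ₁) ∧
      r = klDiv Q (fun M => binomPmf L p_src (M : ℕ))} := by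
    refine ⟨0, ?_⟩
    rintro r ⟨Q, ⟨hnn, hs⟩, hc, rfl⟩
    rw [klDiv_eq_nkl]
    exact div_nonneg
      (nkl_nonneg Q _ hnn hs (fun M => bpos L p_src hps h3 M) (bsum L p_src))
      (le_of_lt (Real.log_pos (by norm_num)))
  refine le_csInf hBne ?_
  rintro r ⟨Q, ⟨hnn, hs⟩, hc, rfl⟩
  obtain ⟨Q', ⟨h1', h2'⟩, h3', h4'⟩ :=
    main_aux L hL p_odd p_src h1 h2 h3 ν hν0 hνzero δ₁ hδ₁ Q hnn hs hc
  exact csInf_le_of_le hAbdd ⟨Q', ⟨h1', h2'⟩, h3', rfl⟩ h4'
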